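/- Let S be a finite set of points in ℝ² in general position and let a, b ∈ S be distinct points such that the segment ab is an edge of the convex hull of S (i.e., all points of S \ {a,b} lie strictly on one side of the line through a and b). If there exist points x, y ∈ S such that a, b, x, y are the vertices, in convex position, of a quadrilateral whose interior contains no point of S and whose boundary contains the edge ab (a convex 4-hole on edge ab), then ab is not an exit edge of S. -/
import Mathlib


open Finset

/-- Points of the plane. -/
abbrev Pt := ℝ × ℝ

/-- Twice the signed area of the triangle `p q r` (orientation determinant). -/
def det3 (p q r : Pt) : ℝ := (q.1 - p.1) * (r.2 - p.2) - (q.2 - p.2) * (r.1 - p.1)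

/-- A finite point set is in general position if no three distinct points are collinear. -/
def GenPos (S : Finset Pt) : Prop :=
  ∀ p ∈ S, ∀ q ∈ S, ∀ r ∈ S, p ≠ q → p ≠ r → q ≠ r → det3 p q r ≠ 0

/-- The line through `u` and `v` strictly separates the points `x` and `y`. -/
def StrictSep (u v x y : Pt) : Prop := det3 u v x * det3 u v y < 0

/-- `ab` is an exit edge of `S` with witness `c`: no point `p ∈ S \ {a,b,c}` is such that
the line through `a` and `p` strictly separates `b` from `c`, or the line through `b`
and `p` strictly separates `a` from `c`. -/
def IsExitWitness (S : Finset Pt) (a b c : Pt) : Prop :=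
  a ∈ S ∧ b ∈ S ∧ c ∈ S ∧ a ≠ b ∧ a ≠ c ∧ b ≠ c ∧
    ∀ p ∈ S, p ≠ a → p ≠ b → p ≠ c → ¬ StrictSep a p b c ∧ ¬ StrictSep b p a c

/-- `ab` is an exit edge of `S` if it has some witness. -/
def IsExitEdge (S : Finset Pt) (a b : Pt) : Prop := ∃ c, IsExitWitness S a b c

/-- `ab` is an edge of the convex hull of `S`: all other points of `S` lie strictly on
one side of the line through `a` and `b`. -/
def IsHullEdge (S : Finset Pt) (a b : Pt) : Prop :=
  (∀ p ∈ S, p ≠ a → p ≠ b → 0 < det3 a b p) ∨ (∀ p ∈ S, p ≠ a → p ≠ b → det3 a b p < 0)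

/-- The four points `p q r s`, in this cyclic order, are the vertices of a convex
quadrilateral traced counterclockwise. -/
def ConvexCCW4 (p q r s : Pt) : Prop :=
  0 < det3 p q r ∧ 0 < det3 q r s ∧ 0 < det3 r s p ∧ 0 < det3 s p q

/-- `a, b, x, y` span a convex quadrilateral with `ab` as one of its edges. -/
def ConvexQuadOnEdge (a b x y : Pt) : Prop :=
  ConvexCCW4 a b x y ∨ ConvexCCW4 a b y x ∨ ConvexCCW4 b a x y ∨ ConvexCCW4 b a y x

/-- The open interior of the quadrilateral spanned by `a, b, x, y` (in convex position)
contains no point of `S`. -/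
def QuadInteriorEmpty (S : Finset Pt) (a b x y : Pt) : Prop :=
  ∀ p ∈ S, p ∉ interior (convexHull ℝ ({a, b, x, y} : Set Pt))


section Aux

lemma det3_cyc (p q r : Pt) : det3 q r p = det3 p q r := by unfold det3; ring
lemma det3_swap23 (p q r : Pt) : det3 p r q = -det3 p q r := by unfold det3; ring
lemma det3_swap12 (p q r : Pt) : det3 q p r = -det3 p q r := by unfold det3; ring
lemma det3_sum (p q r z : Pt) : det3 p q z + det3 q r z + det3 r p z = det3 p q r := by
  unfold det3; ring

lemma mem_interior_tri {p q r c : Pt} (h1 : 0 < det3 p q c) (h2 : 0 < det3 q r c)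
    (h3 : 0 < det3 r p c) : c ∈ interior (convexHull ℝ ({p, q, r} : Set Pt)) := by
  have hcont : ∀ u v : Pt, Continuous (fun z : Pt => det3 u v z) := by
    intro u v; unfold det3; fun_prop
  have hUopen : IsOpen {z : Pt | 0 < det3 p q z ∧ 0 < det3 q r z ∧ 0 < det3 r p z} :=
    ((isOpen_lt continuous_const (hcont p q)).and
      ((isOpen_lt continuous_const (hcont q r)).and (isOpen_lt continuous_const (hcont r p))))
  have hUsub : {z : Pt | 0 < det3 p q z ∧ 0 < det3 q r z ∧ 0 < det3 r p z}
      ⊆ convexHull ℝ ({p, q, r} : Set Pt) := by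
    rintro z ⟨hd1, hd2, hd3⟩
    have hD : det3 p q z + det3 q r z + det3 r p z = det3 p q r := det3_sum p q r z
    have hDpos : 0 < det3 p q r := by linarith
    have hmem := Finset.centerMass_mem_convexHull (Finset.univ : Finset (Fin 3))
      (w := ![det3 q r z, det3 r p z, det3 p q z]) (z := ![p, q, r])
      (s := ({p, q, r} : Set Pt))
      (by intro i _; fin_cases i <;> simp <;> linarith)
      (by simp [Fin.sum_univ_three]; linarith)
      (by intro i _; fin_cases i <;> simp)
    convert hmem using 1
    unfold Finset.centerMass
    rw [Fin.sum_univ_three, Fin.sum_univ_three]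
    simp only [Matrix.cons_val_zero, Matrix.cons_val_one, Matrix.head_cons, Matrix.cons_val_two,
      Matrix.tail_cons]
    have hne : det3 q r z + det3 r p z + det3 p q z ≠ 0 := by
      intro h; rw [show det3 q r z + det3 r p z + det3 p q z = det3 p q r by linarith] at h
      exact hDpos.ne' h
    rw [Prod.ext_iff]
    constructor <;>
    · simp only [Prod.smul_fst, Prod.smul_snd, Prod.fst_add, Prod.snd_add, smul_eq_mul]
      rw [eq_comm, inv_mul_eq_iff_eq_mul₀ hne]
      unfold det3; ring
  exact interior_maximal hUsub hUopen ⟨h1, h2, h3⟩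

lemma witness_symm {S : Finset Pt} {a b c : Pt} (h : IsExitWitness S a b c) :
    IsExitWitness S b a c := by
  obtain ⟨ha, hb, hc, hab, hac, hbc, hcond⟩ := h
  exact ⟨hb, ha, hc, hab.symm, hbc, hac, fun p hp hpb hpa hpc =>
    ⟨(hcond p hp hpa hpb hpc).2, (hcond p hp hpa hpb hpc).1⟩⟩

lemma quad_set_swap_xy (a b x y : Pt) : ({a, b, x, y} : Set Pt) = {a, b, y, x} := by
  ext z; simp only [Set.mem_insert_iff, Set.mem_singleton_iff]; tauto

lemma quad_set_swap_ab (a b x y : Pt) : ({a, b, x, y} : Set Pt) = {b, a, x, y} := by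
  ext z; simp only [Set.mem_insert_iff, Set.mem_singleton_iff]; tauto

lemma core (S : Finset Pt) (a b x y : Pt) (hgp : GenPos S)
    (ha : a ∈ S) (hb : b ∈ S) (hx : x ∈ S) (hy : y ∈ S)
    (hxa : x ≠ a) (hxb : x ≠ b) (hya : y ≠ a) (hyb : y ≠ b) (hxy : x ≠ y)
    (hquad : ConvexCCW4 a b x y)
    (hempty : QuadInteriorEmpty S a b x y)
    (hhull : ∀ p ∈ S, p ≠ a → p ≠ b → 0 < det3 a b p)
    (c : Pt) (hw : IsExitWitness S a b c) : False := by
  obtain ⟨_, _, hcS, hab, hac, hbc, hcond⟩ := hw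
  obtain ⟨q1, q2, q3, q4⟩ := hquad
  by_cases hcy : c = y
  · -- use p = x; the line ax separates b from y
    have hcx := hcond x hx hxa hxb (fun h => hxy (h.trans hcy))
    apply hcx.1
    unfold StrictSep
    rw [hcy]
    nlinarith [det3_swap23 a b x, (det3_cyc a x y).symm, q1, q3]
  by_cases hcx : c = x
  · -- use p = y; the line by separates a from x
    have hcy' := hcond y hy hya hyb (fun h => hxy (h.trans hcx).symm)
    apply hcy'.2
    unfold StrictSep
    rw [hcx]
    nlinarith [(det3_cyc a b y).symm, (det3_cyc y a b), det3_swap23 b x y, q2, q4]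
  · -- c is none of x, y : show c lies in the interior of triangle a b x
    have hax : a ≠ x := fun h => hxa h.symm
    have hbx : b ≠ x := fun h => hxb h.symm
    have hxc : x ≠ c := fun h => hcx h.symm
    have haxc : det3 a x c ≠ 0 := hgp a ha x hx c hcS hax hac hxc
    have hbxc : det3 b x c ≠ 0 := hgp b hb x hx c hcS hbx hbc hxc
    have hcx' := hcond x hx hxa hxb hxc
    have h1 : det3 a x c < 0 := by
      rcases lt_or_gt_of_ne haxc with h | h
      · exact h
      · exfalso; apply hcx'.1; unfold StrictSep
        nlinarith [det3_swap23 a b x, q1]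
    have h2 : 0 < det3 b x c := by
      rcases lt_or_gt_of_ne hbxc with h | h
      · exfalso; apply hcx'.2; unfold StrictSep
        nlinarith [det3_cyc a b x, det3_cyc x a b, q1]
      · exact h
    have habc : 0 < det3 a b c := hhull c hcS (fun h => hac h.symm) (fun h => hbc h.symm)
    have hxac : 0 < det3 x a c := by
      have := det3_swap12 a x c; linarith
    have hmem : c ∈ interior (convexHull ℝ ({a, b, x} : Set Pt)) :=
      mem_interior_tri habc h2 hxac
    have hsub : ({a, b, x} : Set Pt) ⊆ ({a, b, x, y} : Set Pt) := by
      intro z hz; simp only [Set.mem_insert_iff, Set.mem_singleton_iff] at *; tauto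
    exact hempty c hcS (interior_mono (convexHull_mono hsub) hmem)

end Aux

/-- If `ab` is a hull edge of `S` lying on a convex 4-hole of `S`, then `ab` is not an
exit edge of `S`. -/
theorem hull_edge_on_convex_four_hole_not_exit_edge (S : Finset Pt) (a b : Pt)
    (hgp : GenPos S) (ha : a ∈ S) (hb : b ∈ S) (hab : a ≠ b)
    (hhull : IsHullEdge S a b)
    (hhole : ∃ x ∈ S, ∃ y ∈ S, x ≠ a ∧ x ≠ b ∧ y ≠ a ∧ y ≠ b ∧ x ≠ y ∧
      ConvexQuadOnEdge a b x y ∧ QuadInteriorEmpty S a b x y) :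
    ¬ IsExitEdge S a b := by
  rintro ⟨c, hw⟩
  obtain ⟨x, hx, y, hy, hxa, hxb, hya, hyb, hxy, hquad, hempty⟩ := hhole
  have hempty' : QuadInteriorEmpty S a b y x := by
    intro p hp; rw [quad_set_swap_xy a b y x]; exact hempty p hp
  have hemptyba : QuadInteriorEmpty S b a x y := by
    intro p hp; rw [← quad_set_swap_ab a b x y]; exact hempty p hp
  have hemptyba' : QuadInteriorEmpty S b a y x := by
    intro p hp; rw [quad_set_swap_xy b a y x, ← quad_set_swap_ab a b x y]; exact hempty p hp
  rcases hhull with hpos | hneg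
  · have hxpos : 0 < det3 a b x := hpos x hx hxa hxb
    have hypos : 0 < det3 a b y := hpos y hy hya hyb
    rcases hquad with h | h | h | h
    · exact core S a b x y hgp ha hb hx hy hxa hxb hya hyb hxy h hempty hpos c hw
    · exact core S a b y x hgp ha hb hy hx hya hyb hxa hxb (fun h' => hxy h'.symm) h
        hempty' hpos c hw
    · have := h.1; have := det3_swap12 a b x; linarith
    · have := h.1; have := det3_swap12 a b y; linarith
  · have hneg' : ∀ p ∈ S, p ≠ b → p ≠ a → 0 < det3 b a p := by
      intro p hp hpb hpa
      have := hneg p hp hpa hpb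
      have := det3_swap12 a b p; linarith
    have hxneg : det3 a b x < 0 := hneg x hx hxa hxb
    have hyneg : det3 a b y < 0 := hneg y hy hya hyb
    rcases hquad with h | h | h | h
    · have := h.1; linarith
    · have := h.1; linarith
    · exact core S b a x y hgp hb ha hx hy hxb hxa hyb hya hxy h hemptyba hneg'
        c (witness_symm hw)
    · exact core S b a y x hgp hb ha hy hx hyb hya hxb hxa (fun h' => hxy h'.symm) h
        hemptyba' hneg' c (witness_symm hw)
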